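/- Let A be an n×m real matrix, Y ∈ ℝⁿ, λ > 0, and c > 0. If (μ̂, μ̃̂, β̂) ∈ ℝ × ℝ × ℝᵐ minimizes the objective (μ, μ̃, β) ↦ (1/2)‖Y − μ·1 − μ̃·1 − Aβ‖₂² + λ√(c·μ̃² + ‖β‖₂²), then μ̃̂ = 0. -/

import Mathlib

open scoped BigOperators

/-- If `(μhat, μthat, βhat)` minimizes
`(μ, μ̃, β) ↦ (1/2)‖Y − μ·1 − μ̃·1 − Aβ‖₂² + λ√(c·μ̃² + ‖β‖₂²)` with `λ > 0` and `c > 0`,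
then the penalized intercept `μthat` is zero. -/
theorem stmt_2 (n m : ℕ) (A : Matrix (Fin n) (Fin m) ℝ) (Y : Fin n → ℝ)
    (lam c : ℝ) (hlam : 0 < lam) (hc : 0 < c)
    (μhat μthat : ℝ) (βhat : Fin m → ℝ)
    (hmin : ∀ (μ μt : ℝ) (β : Fin m → ℝ),
      (1 / 2) * (∑ k, (Y k - μhat - μthat - A.mulVec βhat k) ^ 2)
          + lam * Real.sqrt (c * μthat ^ 2 + ∑ i, βhat i ^ 2) ≤
        (1 / 2) * (∑ k, (Y k - μ - μt - A.mulVec β k) ^ 2)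
          + lam * Real.sqrt (c * μt ^ 2 + ∑ i, β i ^ 2)) :
    μthat = 0 := by
  have h := hmin (μhat + μthat) 0 βhat
  have hres : (∑ k, (Y k - μhat - μthat - A.mulVec βhat k) ^ 2)
      = ∑ k, (Y k - (μhat + μthat) - 0 - A.mulVec βhat k) ^ 2 := by
    apply Finset.sum_congr rfl; intro k _; ring
  rw [hres] at h
  rw [add_le_add_iff_left] at h
  have hsqrt : Real.sqrt (c * μthat ^ 2 + ∑ i, βhat i ^ 2)
      ≤ Real.sqrt (c * 0 ^ 2 + ∑ i, βhat i ^ 2) :=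
    (mul_le_mul_iff_right₀ hlam).mp h
  have hS : (0:ℝ) ≤ ∑ i, βhat i ^ 2 :=
    Finset.sum_nonneg fun i _ => sq_nonneg _
  have ha : (0:ℝ) ≤ c * μthat ^ 2 + ∑ i, βhat i ^ 2 := by positivity
  have hb : (0:ℝ) ≤ c * 0 ^ 2 + ∑ i, βhat i ^ 2 := by positivity
  have hle : c * μthat ^ 2 + (∑ i, βhat i ^ 2) ≤ c * 0 ^ 2 + ∑ i, βhat i ^ 2 := by
    nlinarith [Real.sq_sqrt ha, Real.sq_sqrt hb,
      Real.sqrt_nonneg (c * μthat ^ 2 + ∑ i, βhat i ^ 2),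
      Real.sqrt_nonneg (c * 0 ^ 2 + ∑ i, βhat i ^ 2)]
  have hμ2 : μthat ^ 2 = 0 := le_antisymm (by nlinarith) (sq_nonneg _)
  exact pow_eq_zero_iff (two_ne_zero) |>.mp hμ2
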